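/- Assume the forward spiral condition V_{N+k} = M·T(V_{k−1}) for all k ≥ 1 and the normalization det ρ_j = 1 for j = 0, 1, …, N (which forces c_j = 1 for 0 ≤ j ≤ N−1 and d_{−1} = 1/c_{−1}). Set A_0 := 1 + a_0·b_{−1} and A_2 := 1 + a_2·b_1, and assume A_0 ≠ 0. Then the recursion coefficients at index N+1 satisfy a_{N+1} = a_2, b_{N+1} = b_{−1}·A_2/A_0, and c_{N+1} = c_{−1}·A_2/A_0. -/

import Mathlib

open Matrix

/-- The 3×3 matrix with columns `u, v, w`. -/
def colMat (u v w : Fin 3 → ℝ) : Matrix (Fin 3) (Fin 3) ℝ :=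
  Matrix.of fun i j => ![u, v, w] j i


lemma colMat_mul (A : Matrix (Fin 3) (Fin 3) ℝ) (u v w : Fin 3 → ℝ) :
    A * colMat u v w = colMat (A.mulVec u) (A.mulVec v) (A.mulVec w) := by
  ext i j
  fin_cases j <;>
    simp [colMat, Matrix.mul_apply, Matrix.mulVec, dotProduct, Fin.sum_univ_three]

lemma colMat_mulVec (u v w : Fin 3 → ℝ) (s : Fin 3 → ℝ) :
    (colMat u v w).mulVec s = s 0 • u + s 1 • v + s 2 • w := by
  ext i
  simp [colMat, Matrix.mulVec, dotProduct, Fin.sum_univ_three]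
  ring

lemma colMat_det (u v w : Fin 3 → ℝ) :
    (colMat u v w).det =
      u 0 * (v 1 * w 2 - v 2 * w 1) - v 0 * (u 1 * w 2 - u 2 * w 1)
        + w 0 * (u 1 * v 2 - u 2 * v 1) := by
  simp [colMat, Matrix.det_fin_three]
  ring

lemma crossCross' (u v w x : Fin 3 → ℝ) :
    crossProduct (crossProduct u v) (crossProduct w x) =
      (colMat u v x).det • w - (colMat u v w).det • x := by
  ext i
  fin_cases i <;>
    simp [crossProduct, colMat, Matrix.det_fin_three] <;> ring

/-- under the forward spiral condition and the normalization
`det ρ_j = 1` for `j = 0, …, N`, with `A₀ = 1 + a₀·b_{−1} ≠ 0` and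
`A₂ = 1 + a₂·b₁`, the recursion coefficients at index `N+1` satisfy
`a_{N+1} = a₂`, `b_{N+1} = b_{−1}·A₂/A₀`, and `c_{N+1} = c_{−1}·A₂/A₀`. -/
theorem coefficients_at_N_plus_one (N : ℕ) (hN : 5 ≤ N)
    (V : ℤ → Fin 3 → ℝ) (a b c : ℤ → ℝ)
    (hrec : ∀ j : ℤ, V (j + 3) = a j • V (j + 2) + b j • V (j + 1) + c j • V j)
    (ρ : ℤ → Matrix (Fin 3) (Fin 3) ℝ)
    (hρ : ∀ j : ℤ, ρ j = colMat (V j) (V (j + 1)) (V (j + 2)))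
    (hρinv : ∀ j : ℤ, IsUnit (ρ j))
    (M : Matrix (Fin 3) (Fin 3) ℝ) (hM : M.det = 1)
    (T : ℤ → Fin 3 → ℝ)
    (hT : ∀ j : ℤ, T j =
      crossProduct (crossProduct (V (j - 1)) (V (j + 1))) (crossProduct (V j) (V (j + 2))))
    (hfwd : ∀ k : ℤ, 1 ≤ k → V ((N : ℤ) + k) = M.mulVec (T (k - 1)))
    (hnorm : ∀ j : ℤ, 0 ≤ j → j ≤ (N : ℤ) → (ρ j).det = 1)
    (hA0 : 1 + a 0 * b (-1) ≠ 0) :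
    a ((N : ℤ) + 1) = a 2 ∧
    b ((N : ℤ) + 1) = b (-1) * (1 + a 2 * b 1) / (1 + a 0 * b (-1)) ∧
    c ((N : ℤ) + 1) = c (-1) * (1 + a 2 * b 1) / (1 + a 0 * b (-1)) := by
  have hN' : (5:ℤ) ≤ (N:ℤ) := by exact_mod_cast hN
  set n : ℤ := (N:ℤ) with hn
  -- determinant recursion
  have hdet : ∀ j : ℤ, (ρ (j+1)).det = c j * (ρ j).det := by
    intro j
    rw [hρ (j+1), hρ j, show j+1+1 = j+2 by ring, show j+1+2 = j+3 by ring, hrec j,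
      colMat_det, colMat_det]
    simp only [Pi.add_apply, Pi.smul_apply, smul_eq_mul]
    ring
  -- normalization facts
  have d0 : (ρ 0).det = 1 := hnorm 0 (by norm_num) (by linarith)
  have d1 : (ρ 1).det = 1 := hnorm 1 (by norm_num) (by linarith)
  have d2 : (ρ 2).det = 1 := hnorm 2 (by norm_num) (by linarith)
  have d3 : (ρ 3).det = 1 := hnorm 3 (by norm_num) (by linarith)
  set D : ℝ := (ρ (-1)).det with hDdef
  have hcD : c (-1) * D = 1 := by
    have := hdet (-1); norm_num at this; rw [d0] at this; linarith
  have hc0 : c 0 = 1 := by have := hdet 0; norm_num [d0, d1] at this; linarith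
  have hc1 : c 1 = 1 := by have := hdet 1; norm_num [d1, d2] at this; linarith
  have hc2 : c 2 = 1 := by have := hdet 2; norm_num [d2, d3] at this; linarith
  have hDne : D ≠ 0 := by intro h; rw [h, mul_zero] at hcD; norm_num at hcD
  -- T formula
  have hTj : ∀ j : ℤ, T j = ((ρ (j-1)).det) • V (j+2) - (b (j-1) * (ρ (j-1)).det) • V j := by
    intro j
    have hv2 : V (j+2) = a (j-1) • V (j+1) + b (j-1) • V j + c (j-1) • V (j-1) := by
      have h := hrec (j-1)
      rw [show j-1+3 = j+2 by ring, show j-1+2 = j+1 by ring, show j-1+1 = j by ring] at h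
      exact h
    rw [hT j, crossCross', hρ (j-1), show j-1+1 = j by ring, show j-1+2 = j+1 by ring]
    ext i
    have h2 := congrFun hv2 i
    simp only [Pi.add_apply, Pi.smul_apply, smul_eq_mul, Pi.sub_apply] at h2 ⊢
    rw [colMat_det, colMat_det, colMat_det]
    have h2' := congrFun hv2 0
    have h2'' := congrFun hv2 1
    have h2''' := congrFun hv2 2
    simp only [Pi.add_apply, Pi.smul_apply, smul_eq_mul] at h2' h2'' h2'''
    rw [h2, h2', h2'', h2''']
    ring
  -- basis expansions
  have hv3 : V 3 = a 0 • V 2 + b 0 • V 1 + V 0 := by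
    have h := hrec 0; norm_num [hc0] at h; exact h
  have hv4 : V 4 = a 1 • V 3 + b 1 • V 2 + V 1 := by
    have h := hrec 1; norm_num [hc1] at h; exact h
  have hv5 : V 5 = a 2 • V 4 + b 2 • V 3 + V 2 := by
    have h := hrec 2; norm_num [hc2] at h; exact h
  -- T values
  have hT0 : T 0 = D • V 2 - (b (-1) * D) • V 0 := by
    have h := hTj 0; norm_num at h; exact h
  have hT1 : T 1 = V 3 - b 0 • V 1 := by
    have h := hTj 1; norm_num [d0] at h; exact h
  have hT2 : T 2 = V 4 - b 1 • V 2 := by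
    have h := hTj 2; norm_num [d1] at h; exact h
  have hT3 : T 3 = V 5 - b 2 • V 3 := by
    have h := hTj 3; norm_num [d2] at h; exact h
  -- forward values
  have hW1 : V (n+1) = M.mulVec (T 0) := by have h := hfwd 1 (by norm_num); norm_num at h; exact h
  have hW2 : V (n+2) = M.mulVec (T 1) := by have h := hfwd 2 (by norm_num); norm_num at h; exact h
  have hW3 : V (n+3) = M.mulVec (T 2) := by have h := hfwd 3 (by norm_num); norm_num at h; exact h
  have hW4 : V (n+4) = M.mulVec (T 3) := by have h := hfwd 4 (by norm_num); norm_num at h; exact h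
  set α := a (n+1) with hα
  set β := b (n+1) with hβ
  set γ := c (n+1) with hγ
  -- main equation
  have hMinj : Function.Injective M.mulVec :=
    Matrix.mulVec_injective_iff_isUnit.mpr
      ((Matrix.isUnit_iff_isUnit_det M).mpr (by rw [hM]; exact isUnit_one))
  have hmain : T 3 = α • T 2 + β • T 1 + γ • T 0 := by
    apply hMinj
    have h := hrec (n+1)
    rw [show n+1+3 = n+4 by ring, show n+1+2 = n+3 by ring, show n+1+1 = n+2 by ring,
      hW1, hW2, hW3, hW4] at h
    rw [h]
    simp [Matrix.mulVec_add, Matrix.mulVec_smul]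
    rfl
  -- ρ 0 injectivity
  have hρ0 : ρ 0 = colMat (V 0) (V 1) (V 2) := by have h := hρ 0; norm_num at h; exact h
  have hρ0inj : Function.Injective (colMat (V 0) (V 1) (V 2)).mulVec := by
    rw [← hρ0]; exact Matrix.mulVec_injective_iff_isUnit.mpr (hρinv 0)
  -- extract scalar equations
  have key : (colMat (V 0) (V 1) (V 2)).mulVec
      ![a 2 * a 1 - (α * a 1 + β - γ * D * b (-1)),
        (a 2 - α) * (a 1 * b 0 + 1),
        a 2 * (a 1 * a 0 + b 1) + 1 - (α * a 1 * a 0 + β * a 0 + γ * D)] = 0 := by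
    rw [colMat_mulVec]
    have h := hmain
    rw [hT3, hT2, hT1, hT0, hv5, hv4, hv3] at h
    ext i
    have h' := congrFun h i
    simp only [Pi.add_apply, Pi.sub_apply, Pi.smul_apply, smul_eq_mul, Pi.zero_apply,
      Matrix.cons_val_zero, Matrix.cons_val_one, Matrix.head_cons, Matrix.cons_val_two,
      Matrix.tail_cons] at h' ⊢
    linear_combination h'
  have key' : (colMat (V 0) (V 1) (V 2)).mulVec
      ![a 2 * a 1 - (α * a 1 + β - γ * D * b (-1)),
        (a 2 - α) * (a 1 * b 0 + 1),
        a 2 * (a 1 * a 0 + b 1) + 1 - (α * a 1 * a 0 + β * a 0 + γ * D)]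
      = (colMat (V 0) (V 1) (V 2)).mulVec 0 := by
    rw [Matrix.mulVec_zero]; exact key
  have hkey0 := hρ0inj key'
  have hs0 : a 2 * a 1 - (α * a 1 + β - γ * D * b (-1)) = 0 := by
    have h := congrFun hkey0 0
    simpa only [Matrix.cons_val_zero, Pi.zero_apply] using h
  have hs1 : (a 2 - α) * (a 1 * b 0 + 1) = 0 := by
    have h := congrFun hkey0 1
    simpa only [Matrix.cons_val_one, Matrix.cons_val_zero, Matrix.head_cons, Pi.zero_apply] using h
  have hs2 : a 2 * (a 1 * a 0 + b 1) + 1 - (α * a 1 * a 0 + β * a 0 + γ * D) = 0 := by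
    have h := congrFun hkey0 2
    simpa only [Matrix.cons_val_two, Matrix.tail_cons, Matrix.head_cons, Pi.zero_apply] using h
  -- 1 + a1*b0 ≠ 0 via det ρ (n+1)
  have ht0v : T 0 = (colMat (V 0) (V 1) (V 2)).mulVec ![-(b (-1) * D), 0, D] := by
    rw [colMat_mulVec, hT0]
    ext i
    simp only [Pi.add_apply, Pi.sub_apply, Pi.smul_apply, smul_eq_mul,
      Matrix.cons_val_zero, Matrix.cons_val_one, Matrix.head_cons, Matrix.cons_val_two,
      Matrix.tail_cons]
    ring
  have ht1v : T 1 = (colMat (V 0) (V 1) (V 2)).mulVec ![1, 0, a 0] := by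
    rw [colMat_mulVec, hT1, hv3]
    ext i
    simp only [Pi.add_apply, Pi.sub_apply, Pi.smul_apply, smul_eq_mul,
      Matrix.cons_val_zero, Matrix.cons_val_one, Matrix.head_cons, Matrix.cons_val_two,
      Matrix.tail_cons]
    ring
  have ht2v : T 2 = (colMat (V 0) (V 1) (V 2)).mulVec ![a 1, a 1 * b 0 + 1, a 1 * a 0] := by
    rw [colMat_mulVec, hT2, hv4, hv3]
    ext i
    simp only [Pi.add_apply, Pi.sub_apply, Pi.smul_apply, smul_eq_mul,
      Matrix.cons_val_zero, Matrix.cons_val_one, Matrix.head_cons, Matrix.cons_val_two,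
      Matrix.tail_cons]
    ring
  have hdetN1 : (ρ (n+1)).det = D * (1 + a 1 * b 0) * (1 + a 0 * b (-1)) := by
    have hcol : ρ (n+1) = colMat (V (n+1)) (V (n+2)) (V (n+3)) := by
      have h := hρ (n+1)
      rw [show n+1+1 = n+2 by ring, show n+1+2 = n+3 by ring] at h
      exact h
    rw [hcol, hW1, hW2, hW3, ht0v, ht1v, ht2v, ← colMat_mul, ← colMat_mul, Matrix.det_mul,
      Matrix.det_mul, hM, ← hρ0, d0, colMat_det]
    simp only [Matrix.cons_val_zero, Matrix.cons_val_one, Matrix.head_cons, Matrix.cons_val_two,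
      Matrix.tail_cons]
    ring
  have hfac : (1 + a 1 * b 0) ≠ 0 := by
    intro h0
    have := (Matrix.isUnit_iff_isUnit_det _).mp (hρinv (n+1))
    rw [hdetN1, h0] at this
    simp at this
  -- solve
  have hα2 : α = a 2 := by
    rcases mul_eq_zero.mp hs1 with h | h
    · linarith
    · exact absurd (by linarith : 1 + a 1 * b 0 = 0) hfac
  have hβval : β = γ * D * b (-1) := by rw [hα2] at hs0; linarith
  have hγD : γ * D * (1 + a 0 * b (-1)) = 1 + a 2 * b 1 := by
    rw [hα2] at hs2; rw [hβval] at hs2; linarith [hs2]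
  have hγDval : γ * D = (1 + a 2 * b 1) / (1 + a 0 * b (-1)) := by
    field_simp
    linarith [hγD]
  refine ⟨hα2, ?_, ?_⟩
  · rw [hβval, hγDval]; ring
  · have : γ = γ * D * c (-1) := by
      rw [mul_assoc, mul_comm D, hcD, mul_one]
    rw [this, hγDval]; ring
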